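/- (Jung's theorem in the plane) If S ⊆ ℝ² is a bounded set with diameter δ, then S is contained in some closed disk of radius δ/√3. -/

import Mathlib

open Metric Real

section aux

variable {E : Type*} [NormedAddCommGroup E] [InnerProductSpace ℝ E]

lemma quad_norm (u v : E) (t1 t2 : ℝ) :
    ‖t1 • u + t2 • v‖ ^ 2 =
      t1 ^ 2 * ‖u‖ ^ 2 + 2 * (t1 * t2) * (inner ℝ u v : ℝ) + t2 ^ 2 * ‖v‖ ^ 2 := by
  rw [norm_add_sq_real, norm_smul, norm_smul, real_inner_smul_left, real_inner_smul_right]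
  simp [mul_pow]
  ring

lemma sq_le_aux {δ w : ℝ} (hδ : 0 ≤ δ) (hw : 0 ≤ w) (h : w ^ 2 ≤ δ ^ 2 / 3) :
    w ≤ δ / Real.sqrt 3 := by
  have h3 : Real.sqrt 3 > 0 := by positivity
  rw [le_div_iff₀ h3]
  have h2 : (w * Real.sqrt 3) ^ 2 ≤ δ ^ 2 := by
    rw [mul_pow, Real.sq_sqrt (by norm_num : (0:ℝ) ≤ 3)]
    nlinarith
  nlinarith [mul_nonneg hw h3.le]

lemma jung_core (p q s δ2 : ℝ) (hs : 0 < s) (hps : s < p) (hqs : s < q)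
    (h1 : p ≤ δ2) (h2 : q ≤ δ2) (h3 : p + q - 2*s ≤ δ2) :
    3 * (p*q*(p+q-2*s)) ≤ δ2 * (4*(p*q - s^2)) := by
  nlinarith [mul_nonneg (sub_nonneg.2 h1) (sub_nonneg.2 h2),
    mul_nonneg (sub_nonneg.2 h1) (sub_pos.2 hqs).le,
    mul_nonneg (sub_nonneg.2 h2) (sub_pos.2 hps).le,
    mul_nonneg (sub_nonneg.2 h3) hs.le,
    mul_nonneg (sub_pos.2 hps).le (sub_pos.2 hqs).le,
    sq_nonneg (p - q), sq_nonneg (p + q - 2*s), sq_nonneg (p - s), sq_nonneg (q - s),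
    mul_nonneg (mul_nonneg (sub_nonneg.2 h3) hs.le) hs.le,
    mul_nonneg (mul_nonneg (sub_nonneg.2 h1) (sub_pos.2 hqs).le) hs.le,
    mul_nonneg (mul_nonneg (sub_nonneg.2 h2) (sub_pos.2 hps).le) hs.le,
    mul_nonneg (mul_nonneg (sub_nonneg.2 h3) (sub_pos.2 hps).le) (sub_pos.2 hqs).le]

set_option maxHeartbeats 1000000 in
lemma jung3 (a b c : E) (δ : ℝ) (hab : dist a b ≤ δ) (hac : dist a c ≤ δ)
    (hbc : dist b c ≤ δ) :
    ∃ x : E, dist a x ≤ δ / Real.sqrt 3 ∧ dist b x ≤ δ / Real.sqrt 3 ∧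
      dist c x ≤ δ / Real.sqrt 3 := by
  have hδ : 0 ≤ δ := le_trans dist_nonneg hab
  set u := b - a with hu
  set v := c - a with hv
  set p := ‖u‖ ^ 2 with hp_def
  set q := ‖v‖ ^ 2 with hq_def
  set s := (inner ℝ u v : ℝ) with hs_def
  have hp0 : 0 ≤ p := sq_nonneg _
  have hq0 : 0 ≤ q := sq_nonneg _
  have hp : p ≤ δ ^ 2 := by
    have h : ‖u‖ ≤ δ := by rw [hu, ← dist_eq_norm, dist_comm]; exact hab
    nlinarith [norm_nonneg u]
  have hq : q ≤ δ ^ 2 := by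
    have h : ‖v‖ ≤ δ := by rw [hv, ← dist_eq_norm, dist_comm]; exact hac
    nlinarith [norm_nonneg v]
  have hr : p + q - 2 * s ≤ δ ^ 2 := by
    have e : ‖u - v‖ = dist b c := by
      rw [dist_eq_norm]; congr 1; rw [hu, hv]; abel
    have h : ‖u - v‖ ^ 2 = p + q - 2 * s := by
      rw [norm_sub_sq_real]; ring
    nlinarith [norm_nonneg (u - v), e ▸ hbc]
  have key : ∀ t1 t2 : ℝ,
      t1 ^ 2 * p + 2 * (t1 * t2) * s + t2 ^ 2 * q ≤ δ ^ 2 / 3 →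
      (t1 - 1) ^ 2 * p + 2 * ((t1 - 1) * t2) * s + t2 ^ 2 * q ≤ δ ^ 2 / 3 →
      t1 ^ 2 * p + 2 * (t1 * (t2 - 1)) * s + (t2 - 1) ^ 2 * q ≤ δ ^ 2 / 3 →
      ∃ x : E, dist a x ≤ δ / Real.sqrt 3 ∧ dist b x ≤ δ / Real.sqrt 3 ∧
        dist c x ≤ δ / Real.sqrt 3 := by
    intro t1 t2 h1 h2 h3
    refine ⟨a + (t1 • u + t2 • v), ?_, ?_, ?_⟩
    · apply sq_le_aux hδ dist_nonneg
      rw [dist_self_add_right, quad_norm]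
      exact h1
    · apply sq_le_aux hδ dist_nonneg
      have e : dist b (a + (t1 • u + t2 • v)) = ‖(1 - t1) • u + (-t2) • v‖ := by
        rw [dist_eq_norm, hu, hv]; congr 1; module
      rw [e, quad_norm]
      refine le_trans (le_of_eq ?_) h2; ring
    · apply sq_le_aux hδ dist_nonneg
      have e : dist c (a + (t1 • u + t2 • v)) = ‖(-t1) • u + (1 - t2) • v‖ := by
        rw [dist_eq_norm, hu, hv]; congr 1; module
      rw [e, quad_norm]
      refine le_trans (le_of_eq ?_) h3; ring
  clear_value p q s
  rcases le_or_gt s 0 with hs | hs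
  · exact key (1/2) (1/2) (by linarith) (by linarith) (by linarith)
  rcases le_or_gt p s with hps | hps
  · exact key 0 (1/2) (by linarith) (by linarith) (by linarith)
  rcases le_or_gt q s with hqs | hqs
  · exact key (1/2) 0 (by linarith) (by linarith) (by linarith)
  · -- acute: circumcenter
    have hD : 0 < 4 * (p * q - s ^ 2) := by nlinarith
    set D := 4 * (p * q - s ^ 2) with hD_def
    have hmain : p * q * (p + q - 2 * s) / D ≤ δ ^ 2 / 3 := by
      rw [div_le_div_iff₀ hD (by norm_num)]
      nlinarith [jung_core p q s (δ ^ 2) hs hps hqs hp hq hr]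
    apply key (2 * q * (p - s) / D) (2 * p * (q - s) / D)
    · calc (2 * q * (p - s) / D) ^ 2 * p +
          2 * (2 * q * (p - s) / D * (2 * p * (q - s) / D)) * s +
          (2 * p * (q - s) / D) ^ 2 * q = p * q * (p + q - 2 * s) / D := by
            field_simp; rw [hD_def]; ring
        _ ≤ δ ^ 2 / 3 := hmain
    · calc (2 * q * (p - s) / D - 1) ^ 2 * p +
          2 * ((2 * q * (p - s) / D - 1) * (2 * p * (q - s) / D)) * s +
          (2 * p * (q - s) / D) ^ 2 * q = p * q * (p + q - 2 * s) / D := by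
            field_simp; rw [hD_def]; ring
        _ ≤ δ ^ 2 / 3 := hmain
    · calc (2 * q * (p - s) / D) ^ 2 * p +
          2 * ((2 * q * (p - s) / D) * (2 * p * (q - s) / D - 1)) * s +
          (2 * p * (q - s) / D - 1) ^ 2 * q = p * q * (p + q - 2 * s) / D := by
            field_simp; rw [hD_def]; ring
        _ ≤ δ ^ 2 / 3 := hmain

end aux

theorem jung_plane (S : Set (EuclideanSpace ℝ (Fin 2))) (δ : ℝ)
    (hb : Bornology.IsBounded S) (hdiam : Metric.diam S = δ) :
    ∃ c : EuclideanSpace ℝ (Fin 2), S ⊆ Metric.closedBall c (δ / Real.sqrt 3) := by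
  subst hdiam
  rcases S.eq_empty_or_nonempty with rfl | hne
  · exact ⟨0, by simp⟩
  set r := Metric.diam S / Real.sqrt 3 with hr
  have hpair : ∀ x ∈ S, ∀ y ∈ S, dist x y ≤ Metric.diam S :=
    fun x hx y hy => dist_le_diam_of_mem hb hx hy
  have hfr : Module.finrank ℝ (EuclideanSpace ℝ (Fin 2)) = 2 := by
    simp [finrank_euclideanSpace]
  have key : ∀ I : Finset S, I.card ≤ Module.finrank ℝ (EuclideanSpace ℝ (Fin 2)) + 1 →
      (⋂ i ∈ I, closedBall (i : EuclideanSpace ℝ (Fin 2)) r).Nonempty := by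
    intro I hI
    classical
    rw [hfr] at hI
    have cover : ∀ a b c : S, (∀ i ∈ I, i = a ∨ i = b ∨ i = c) →
        (⋂ i ∈ I, closedBall (i : EuclideanSpace ℝ (Fin 2)) r).Nonempty := by
      intro a b c hcov
      obtain ⟨x, hxa, hxb, hxc⟩ := jung3 (a : EuclideanSpace ℝ (Fin 2)) b c
        (Metric.diam S) (hpair a a.2 b b.2) (hpair a a.2 c c.2) (hpair b b.2 c c.2)
      refine ⟨x, Set.mem_iInter₂.2 fun i hi => ?_⟩
      rcases hcov i hi with rfl | rfl | rfl <;>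
        · rw [mem_closedBall, dist_comm]; assumption
    rcases I.eq_empty_or_nonempty with rfl | ⟨i0, hi0⟩
    · simp
    have h1 : 1 ≤ I.card := Finset.card_pos.2 ⟨i0, hi0⟩
    interval_cases hc : I.card
    · obtain ⟨a, rfl⟩ := Finset.card_eq_one.1 hc
      exact cover a a a (by simp)
    · obtain ⟨a, b, hab, rfl⟩ := Finset.card_eq_two.1 hc
      refine cover a b b ?_
      intro i hi
      simp only [Finset.mem_insert, Finset.mem_singleton] at hi
      tauto
    · obtain ⟨a, b, c, h1, h2, h3, rfl⟩ := Finset.card_eq_three.1 hc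
      refine cover a b c ?_
      intro i hi
      simp only [Finset.mem_insert, Finset.mem_singleton] at hi
      tauto
  obtain ⟨c, hc⟩ := Convex.helly_theorem_compact' (𝕜 := ℝ)
    (F := fun i : S => closedBall (i : EuclideanSpace ℝ (Fin 2)) r)
    (fun i => convex_closedBall _ _) (fun i => isCompact_closedBall _ _) key
  refine ⟨c, fun x hx => ?_⟩
  have hx' := Set.mem_iInter.1 hc ⟨x, hx⟩
  rw [mem_closedBall] at hx' ⊢
  rwa [dist_comm]
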